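/- With g₃(x) = ∫₀¹ min(1 + 𝟙(x ≤ u) + u, 3 − x − u) du, one has ∫₀¹ min(1 + 2x, g₃(x)) dx = 341/144 − (13/48)√13, and this number lies strictly between 1.3915 and 1.3916. -/

import Mathlib

open intervalIntegral

open MeasureTheory Set in
private lemma integ_poly (a b c0 c1 c2 : ℝ) :
    ∫ x in a..b, (c0 + c1 * x + c2 * x ^ 2) =
      (c0 * b + c1 * b ^ 2 / 2 + c2 * b ^ 3 / 3) -
      (c0 * a + c1 * a ^ 2 / 2 + c2 * a ^ 3 / 3) := by
  have h : ∀ x : ℝ, HasDerivAt (fun x => c0 * x + c1 * x ^ 2 / 2 + c2 * x ^ 3 / 3)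
      (c0 + c1 * x + c2 * x ^ 2) x := by
    intro x
    have h1 := (hasDerivAt_id x).const_mul c0
    have h2 := ((hasDerivAt_pow 2 x).const_mul c1).div_const 2
    have h3 := ((hasDerivAt_pow 3 x).const_mul c2).div_const 3
    exact ((h1.add h2).add h3).congr_deriv (by ring)
  rw [intervalIntegral.integral_eq_sub_of_hasDerivAt (fun x _ => h x)
    ((by fun_prop : Continuous fun x : ℝ => c0 + c1 * x + c2 * x ^ 2).intervalIntegrable _ _)]

open MeasureTheory Set in
private lemma ae_ne' (p : ℝ) : ∀ᵐ u : ℝ, u ≠ p := by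
  rw [MeasureTheory.ae_iff]
  simpa [not_not] using (measure_singleton p : volume ({p} : Set ℝ) = 0)

open MeasureTheory Set in
private lemma eq_ae_of_except {f : ℝ → ℝ} {a b p c0 c1 c2 : ℝ}
    (h : ∀ u ∈ Set.uIoc a b, u ≠ p → f u = c0 + c1 * u + c2 * u ^ 2) :
    f =ᵐ[volume.restrict (Set.uIoc a b)] (fun u => c0 + c1 * u + c2 * u ^ 2) := by
  filter_upwards [ae_restrict_of_ae (ae_ne' p), ae_restrict_mem measurableSet_uIoc]
    with u h1 h2
  exact h u h2 h1

open MeasureTheory Set in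
private lemma intInt_of_except {f : ℝ → ℝ} {a b p c0 c1 c2 : ℝ}
    (h : ∀ u ∈ Set.uIoc a b, u ≠ p → f u = c0 + c1 * u + c2 * u ^ 2) :
    IntervalIntegrable f volume a b :=
  ((by fun_prop : Continuous fun u : ℝ => c0 + c1 * u + c2 * u ^ 2).intervalIntegrable a b).congr_ae
    ((eq_ae_of_except h).symm)

open MeasureTheory Set in
private lemma integral_of_except {f : ℝ → ℝ} {a b p c0 c1 c2 : ℝ}
    (h : ∀ u ∈ Set.uIoc a b, u ≠ p → f u = c0 + c1 * u + c2 * u ^ 2) :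
    ∫ u in a..b, f u =
      (c0 * b + c1 * b ^ 2 / 2 + c2 * b ^ 3 / 3) -
      (c0 * a + c1 * a ^ 2 / 2 + c2 * a ^ 3 / 3) := by
  have := intervalIntegral.integral_congr_ae (μ := volume) (f := f)
    (g := fun u => c0 + c1 * u + c2 * u ^ 2)
    (by filter_upwards [ae_ne' p] with u h1 h2; exact h u h2 h1)
  rw [this, integ_poly]

/-- Optimal expected rank continuing from step 2 in Robbins' problem with 3 observations,
given first observation `x`. -/
noncomputable def g₃ (x : ℝ) : ℝ :=
  ∫ u in (0:ℝ)..(1:ℝ), min (1 + (if x ≤ u then (1:ℝ) else 0) + u) (3 - x - u)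

open MeasureTheory Set in
private lemma g3_low {x : ℝ} (h0 : 0 ≤ x) (h1 : x ≤ 1/3) :
    g₃ x = 9/4 - 3/2 * x - x^2/4 := by
  set F : ℝ → ℝ := fun u => min (1 + (if x ≤ u then (1:ℝ) else 0) + u) (3 - x - u) with hF
  have hg : g₃ x = ∫ u in (0:ℝ)..(1:ℝ), F u := rfl
  set m : ℝ := (1 - x)/2 with hm
  have hxm : x ≤ m := by rw [hm]; linarith
  have hm1 : m ≤ 1 := by rw [hm]; linarith
  have hA : ∀ u ∈ Set.uIoc (0:ℝ) x, u ≠ x → F u = 1 + 1 * u + 0 * u ^ 2 := by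
    intro u hu hne
    rw [Set.uIoc_of_le h0] at hu
    have hux : u < x := lt_of_le_of_ne hu.2 hne
    rw [hF]; simp only
    rw [if_neg (not_le.mpr hux), min_eq_left (by linarith)]; ring
  have hB : ∀ u ∈ Set.uIoc x m, u ≠ x → F u = 2 + 1 * u + 0 * u ^ 2 := by
    intro u hu _
    rw [Set.uIoc_of_le hxm] at hu
    rw [hF]; simp only
    rw [if_pos hu.1.le, min_eq_left (by linarith [hu.2])]; ring
  have hC : ∀ u ∈ Set.uIoc m (1:ℝ), u ≠ x → F u = (3 - x) + (-1) * u + 0 * u ^ 2 := by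
    intro u hu _
    rw [Set.uIoc_of_le hm1] at hu
    have : x ≤ u := le_trans hxm hu.1.le
    rw [hF]; simp only
    rw [if_pos this, min_eq_right (by linarith [hu.1])]; ring
  have s1 := integral_add_adjacent_intervals (a := (0:ℝ)) (b := x) (c := m)
    (intInt_of_except hA) (intInt_of_except hB)
  have s2 := integral_add_adjacent_intervals (a := (0:ℝ)) (b := m) (c := 1)
    ((intInt_of_except hA).trans (intInt_of_except hB)) (intInt_of_except hC)
  rw [hg, ← s2, ← s1, integral_of_except hA, integral_of_except hB, integral_of_except hC, hm]
  ring

open MeasureTheory Set in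
private lemma g3_mid {x : ℝ} (h0 : 1/3 ≤ x) (h1 : x ≤ 2/3) :
    g₃ x = 5/2 - 3 * x + 2 * x^2 := by
  set F : ℝ → ℝ := fun u => min (1 + (if x ≤ u then (1:ℝ) else 0) + u) (3 - x - u) with hF
  have hg : g₃ x = ∫ u in (0:ℝ)..(1:ℝ), F u := rfl
  have h0x : (0:ℝ) ≤ x := by linarith
  have hx1 : x ≤ 1 := by linarith
  have hA : ∀ u ∈ Set.uIoc (0:ℝ) x, u ≠ x → F u = 1 + 1 * u + 0 * u ^ 2 := by
    intro u hu hne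
    rw [Set.uIoc_of_le h0x] at hu
    have hux : u < x := lt_of_le_of_ne hu.2 hne
    rw [hF]; simp only
    rw [if_neg (not_le.mpr hux), min_eq_left (by linarith)]; ring
  have hB : ∀ u ∈ Set.uIoc x 1, u ≠ x → F u = (3 - x) + (-1) * u + 0 * u ^ 2 := by
    intro u hu _
    rw [Set.uIoc_of_le hx1] at hu
    rw [hF]; simp only
    rw [if_pos hu.1.le, min_eq_right (by linarith [hu.1])]; ring
  have s1 := integral_add_adjacent_intervals (a := (0:ℝ)) (b := x) (c := 1)
    (intInt_of_except hA) (intInt_of_except hB)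
  rw [hg, ← s1, integral_of_except hA, integral_of_except hB]
  ring

open MeasureTheory Set in
private lemma g3_high {x : ℝ} (h0 : 2/3 ≤ x) (h1 : x ≤ 1) :
    g₃ x = 3/2 - x^2/4 := by
  set F : ℝ → ℝ := fun u => min (1 + (if x ≤ u then (1:ℝ) else 0) + u) (3 - x - u) with hF
  have hg : g₃ x = ∫ u in (0:ℝ)..(1:ℝ), F u := rfl
  have h0b : (0:ℝ) ≤ 1 - x/2 := by linarith
  have hbx : 1 - x/2 ≤ x := by linarith
  have hA : ∀ u ∈ Set.uIoc (0:ℝ) (1 - x/2), u ≠ x → F u = 1 + 1 * u + 0 * u ^ 2 := by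
    intro u hu hne
    rw [Set.uIoc_of_le h0b] at hu
    have hux : u < x := lt_of_le_of_ne (le_trans hu.2 hbx) hne
    rw [hF]; simp only
    rw [if_neg (not_le.mpr hux), min_eq_left (by linarith [hu.2])]; ring
  have hB : ∀ u ∈ Set.uIoc (1 - x/2) x, u ≠ x → F u = (3 - x) + (-1) * u + 0 * u ^ 2 := by
    intro u hu hne
    rw [Set.uIoc_of_le hbx] at hu
    have hux : u < x := lt_of_le_of_ne hu.2 hne
    rw [hF]; simp only
    rw [if_neg (not_le.mpr hux), min_eq_right (by linarith [hu.1])]; ring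
  have hC : ∀ u ∈ Set.uIoc x 1, u ≠ x → F u = (3 - x) + (-1) * u + 0 * u ^ 2 := by
    intro u hu _
    rw [Set.uIoc_of_le h1] at hu
    rw [hF]; simp only
    rw [if_pos hu.1.le, min_eq_right (by linarith [hu.1])]; ring
  have s1 := integral_add_adjacent_intervals (a := (0:ℝ)) (b := 1 - x/2) (c := x)
    (intInt_of_except hA) (intInt_of_except hB)
  have s2 := integral_add_adjacent_intervals (a := (0:ℝ)) (b := x) (c := 1)
    ((intInt_of_except hA).trans (intInt_of_except hB)) (intInt_of_except hC)
  rw [hg, ← s2, ← s1, integral_of_except hA, integral_of_except hB, integral_of_except hC]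
  ring

open MeasureTheory Set in
theorem robbins_n3_value :
    (∫ x in (0:ℝ)..(1:ℝ), min (1 + 2*x) (g₃ x)) = 341/144 - (13/48) * Real.sqrt 13 ∧
    (1.3915 : ℝ) < 341/144 - (13/48) * Real.sqrt 13 ∧
    341/144 - (13/48) * Real.sqrt 13 < (1.3916 : ℝ) := by
  set s : ℝ := Real.sqrt 13 with hsdef
  have hs : s ^ 2 = 13 := Real.sq_sqrt (by norm_num)
  have hs0 : 0 ≤ s := Real.sqrt_nonneg 13
  have hslo : 3.6055 < s := by nlinarith
  have hshi : s < 3.6056 := by nlinarith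
  set t : ℝ := (5 - s)/4 with htdef
  have ht0 : (0:ℝ) ≤ t := by rw [htdef]; linarith
  have ht13 : (1:ℝ)/3 < t := by rw [htdef]; linarith
  have ht23 : t ≤ 2/3 := by rw [htdef]; linarith
  set G : ℝ → ℝ := fun x => min (1 + 2*x) (g₃ x) with hG
  -- quadratic factorization helper
  have hquad : ∀ x : ℝ, 2*x^2 - 5*x + 3/2 = 2*(t - x)*((5+s)/4 - x) := by
    intro x; rw [htdef]; linear_combination (1/8 : ℝ) * hs
  have hA : ∀ x ∈ Set.uIoc (0:ℝ) t, x ≠ 2 → G x = 1 + 2 * x + 0 * x ^ 2 := by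
    intro x hx _
    rw [Set.uIoc_of_le ht0] at hx
    have h0x : 0 < x := hx.1
    have hxt : x ≤ t := hx.2
    have hle : 1 + 2*x ≤ g₃ x := by
      rcases le_or_gt x (1/3) with hc | hc
      · rw [g3_low h0x.le hc]; nlinarith
      · rw [g3_mid hc.le (le_trans hxt ht23)]
        have := hquad x
        nlinarith [mul_nonneg (sub_nonneg.mpr hxt) (show (0:ℝ) ≤ (5+s)/4 - x by linarith)]
    rw [hG]; simp only
    rw [min_eq_left hle]; ring
  have hB : ∀ x ∈ Set.uIoc t (2/3 : ℝ), x ≠ 2 → G x = 5/2 + (-3) * x + 2 * x ^ 2 := by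
    intro x hx _
    rw [Set.uIoc_of_le ht23] at hx
    have h13 : 1/3 ≤ x := le_of_lt (lt_of_lt_of_le ht13 hx.1.le)
    have hge : g₃ x ≤ 1 + 2*x := by
      rw [g3_mid h13 hx.2]
      have := hquad x
      nlinarith [mul_nonneg (sub_nonneg.mpr hx.1.le) (show (0:ℝ) ≤ x - t by linarith [hx.1.le]),
        mul_nonpos_of_nonpos_of_nonneg (show t - x ≤ 0 by linarith [hx.1.le])
          (show (0:ℝ) ≤ (5+s)/4 - x by linarith [hx.2])]
    rw [hG]; simp only
    rw [min_eq_right hge, g3_mid h13 hx.2]; ring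
  have hC : ∀ x ∈ Set.uIoc (2/3 : ℝ) 1, x ≠ 2 → G x = 3/2 + 0 * x + (-(1/4)) * x ^ 2 := by
    intro x hx _
    rw [Set.uIoc_of_le (by norm_num : (2:ℝ)/3 ≤ 1)] at hx
    have hge : g₃ x ≤ 1 + 2*x := by
      rw [g3_high hx.1.le hx.2]; nlinarith [hx.1.le, hx.2]
    rw [hG]; simp only
    rw [min_eq_right hge, g3_high hx.1.le hx.2]; ring
  have s1 := integral_add_adjacent_intervals (a := (0:ℝ)) (b := t) (c := 2/3)
    (intInt_of_except hA) (intInt_of_except hB)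
  have s2 := integral_add_adjacent_intervals (a := (0:ℝ)) (b := 2/3) (c := 1)
    ((intInt_of_except hA).trans (intInt_of_except hB)) (intInt_of_except hC)
  have hval : (∫ x in (0:ℝ)..(1:ℝ), G x) = 341/144 - (13/48) * s := by
    rw [← s2, ← s1, integral_of_except hA, integral_of_except hB, integral_of_except hC]
    rw [htdef]
    linear_combination (s/96 : ℝ) * hs
  refine ⟨hval, by nlinarith, by nlinarith⟩
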